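/- If G is a 2-connected chordal graph, then for every edge uv of G, the Δ-convex hull of {u, v} equals V(G). -/

import Mathlib

variable {V : Type*}

/-- `S` is Δ-convex: no vertex outside `S` is adjacent to two adjacent vertices of `S`. -/
def DeltaConvex (G : SimpleGraph V) (S : Set V) : Prop :=
  ∀ ⦃w u v : V⦄, u ∈ S → v ∈ S → G.Adj u v → G.Adj w u → G.Adj w v → w ∈ S

/-- The Δ-convex hull of `S`: the smallest Δ-convex set containing `S`. -/
def deltaHull (G : SimpleGraph V) (S : Set V) : Set V :=
  ⋂₀ {T : Set V | S ⊆ T ∧ DeltaConvex G T}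

/-- A cycle `c` has a chord: two vertices on the cycle are adjacent in `G`
but the edge between them is not an edge of the cycle. -/
def HasChord (G : SimpleGraph V) {v : V} (c : G.Walk v v) : Prop :=
  ∃ x y : V, x ∈ c.support ∧ y ∈ c.support ∧ G.Adj x y ∧ s(x, y) ∉ c.edges

/-- `G` is chordal: every cycle of length at least 4 has a chord. -/
def Chordal (G : SimpleGraph V) : Prop :=
  ∀ (v : V) (c : G.Walk v v), c.IsCycle → 4 ≤ c.length → HasChord G c

/-- `G` is 2-connected: at least 3 vertices and deleting any vertex leaves it connected. -/
def TwoConnected [Fintype V] (G : SimpleGraph V) : Prop :=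
  3 ≤ Fintype.card V ∧ ∀ v : V, (G.induce {u : V | u ≠ v}).Connected

open SimpleGraph Walk

lemma subset_deltaHull (G : SimpleGraph V) (S : Set V) : S ⊆ deltaHull G S :=
  fun x hx T hT => hT.1 hx

lemma deltaHull_convex (G : SimpleGraph V) (S : Set V) : DeltaConvex G (deltaHull G S) :=
  fun w a b ha hb hab hwa hwb T hT => hT.2 (ha T hT) (hb T hT) hab hwa hwb

lemma deltaHull_min {G : SimpleGraph V} {S T : Set V} (h1 : S ⊆ T) (h2 : DeltaConvex G T) :
    deltaHull G S ⊆ T := fun _ hx => hx T ⟨h1, h2⟩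

lemma edge_mem_of_length_one {G : SimpleGraph V} {x y : V} (p : G.Walk x y)
    (h : p.length = 1) : s(x, y) ∈ p.edges := by
  cases p with
  | nil => simp at h
  | cons h' q =>
    cases q with
    | nil => simp
    | cons h'' r => simp [Walk.length_cons] at h

lemma exists_decomp {G : SimpleGraph V} {x y : V} (p : G.Walk x y) {a b : V}
    (ha : a ∈ p.support) (hb : b ∈ p.support) :
    (∃ (p1 : G.Walk x a) (p2 : G.Walk a b) (p3 : G.Walk b y),
      p = (p1.append p2).append p3) ∨
    (∃ (p1 : G.Walk x b) (p2 : G.Walk b a) (p3 : G.Walk a y),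
      p = (p1.append p2).append p3) := by
  classical
  obtain ⟨q, r, rfl⟩ := Walk.mem_support_iff_exists_append.mp ha
  by_cases hbr : b ∈ r.support
  · obtain ⟨r1, r2, rfl⟩ := Walk.mem_support_iff_exists_append.mp hbr
    exact Or.inl ⟨q, r1, r2, Walk.append_assoc _ _ _⟩
  · have hbq : b ∈ q.support := by
      rcases (Walk.mem_support_append_iff _ _).mp hb with h | h
      · exact h
      · exact absurd h hbr
    obtain ⟨q1, q2, rfl⟩ := Walk.mem_support_iff_exists_append.mp hbq
    exact Or.inr ⟨q1, q2, r, rfl⟩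

lemma exists_boundary {G : SimpleGraph V} (S : Set V) :
    ∀ {a b : V}, G.Walk a b → a ∉ S → b ∈ S → ∃ w t, G.Adj w t ∧ w ∉ S ∧ t ∈ S := by
  intro a b W
  induction W with
  | nil => intro h1 h2; exact absurd h2 h1
  | @cons a m b h q ih =>
    intro ha hb
    by_cases hm : m ∈ S
    · exact ⟨a, m, h, ha, hm⟩
    · exact ih hm hb

lemma exists_entry {G : SimpleGraph V} (S : Set V) :
    ∀ {a b : V} (W : G.Walk a b), a ∉ S → b ∈ S →
      ∃ (s : V) (q : G.Walk a s), s ∈ S ∧ (∀ z ∈ q.support, z ∈ W.support) ∧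
        (∀ z ∈ q.support, z ≠ s → z ∉ S) := by
  intro a b W
  induction W with
  | nil => intro h1 h2; exact absurd h2 h1
  | @cons a m b h q ih =>
    intro ha hb
    by_cases hm : m ∈ S
    · refine ⟨m, Walk.cons h Walk.nil, hm, ?_, ?_⟩
      · intro z hz
        simp only [Walk.support_cons, Walk.support_nil, List.mem_cons,
          List.mem_singleton, List.not_mem_nil, or_false] at hz
        simp only [Walk.support_cons, List.mem_cons]
        rcases hz with rfl | rfl
        · exact Or.inl rfl
        · exact Or.inr (Walk.start_mem_support q)
      · intro z hz hzm
        simp only [Walk.support_cons, Walk.support_nil, List.mem_cons,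
          List.mem_singleton, List.not_mem_nil, or_false] at hz
        rcases hz with rfl | rfl
        · exact ha
        · exact absurd rfl hzm
    · obtain ⟨s, q', hs, hsub, hout⟩ := ih hm hb
      refine ⟨s, Walk.cons h q', hs, ?_, ?_⟩
      · intro z hz
        simp only [Walk.support_cons, List.mem_cons] at hz ⊢
        rcases hz with rfl | hz
        · exact Or.inl rfl
        · exact Or.inr (hsub z hz)
      · intro z hz hzs
        simp only [Walk.support_cons, List.mem_cons] at hz
        rcases hz with rfl | hz
        · exact ha
        · exact hout z hz hzs

lemma key_once {G : SimpleGraph V} {T : Set V} (hT : DeltaConvex G T)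
    {x y a b : V} (p1 : G.Walk x a) (p2 : G.Walk a b) (p3 : G.Walk b y)
    (hp : ((p1.append p2).append p3).IsPath)
    (hxy : G.Adj x y) (hab : G.Adj a b)
    (hexy : s(x, y) ∉ ((p1.append p2).append p3).edges)
    (heab : s(a, b) ∉ ((p1.append p2).append p3).edges)
    (hne : s(a, b) ≠ s(x, y))
    (hx : x ∈ T) (hy : y ∈ T)
    (IH : ∀ (x' y' : V) (q : G.Walk x' y'), q.length < ((p1.append p2).append p3).length →
      q.IsPath → G.Adj x' y' → s(x', y') ∉ q.edges → x' ∈ T → y' ∈ T →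
      ∀ z ∈ q.support, z ∈ T) :
    ∀ z ∈ ((p1.append p2).append p3).support, z ∈ T := by
  set P := (p1.append p2).append p3 with hP
  have hp12 : (p1.append p2).IsPath := hp.of_append_left
  have hp1 : p1.IsPath := hp12.of_append_left
  have hp2 : p2.IsPath := hp12.of_append_right
  have hp3 : p3.IsPath := hp.of_append_right
  have hPedges : P.edges = (p1.edges ++ p2.edges) ++ p3.edges := by
    rw [hP, Walk.edges_append, Walk.edges_append]
  have hPsupp : P.support = (p1.support ++ p2.support.tail) ++ p3.support.tail := by
    rw [hP, Walk.support_append, Walk.support_append]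
  have hnodup : ((p1.support ++ p2.support.tail) ++ p3.support.tail).Nodup := by
    rw [← hPsupp]; exact hp.2
  -- lengths
  have hlenP : P.length = p1.length + p2.length + p3.length := by
    rw [hP, Walk.length_append, Walk.length_append]
  have hl2 : 2 ≤ p2.length := by
    rcases Nat.lt_or_ge p2.length 2 with h | h
    · interval_cases h' : p2.length
      · exact absurd (Walk.eq_of_length_eq_zero h') hab.ne
      · exact absurd (fun he => heab (by rw [hPedges]; simp [he] : s(a,b) ∈ P.edges))
          (fun hcon => hcon (edge_mem_of_length_one p2 h'))
    · exact h
  have hl13 : 1 ≤ p1.length + p3.length := by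
    by_contra hcon
    push_neg at hcon
    have h1 : p1.length = 0 := by omega
    have h3 : p3.length = 0 := by omega
    have hxa : x = a := Walk.eq_of_length_eq_zero h1
    have hby : b = y := Walk.eq_of_length_eq_zero h3
    exact hne (by rw [hxa, hby])
  -- nodup pieces
  have hn1 : p1.support.Nodup := hp1.2
  have hn3 : p3.support.Nodup := hp3.2
  obtain ⟨hn12, hn3t, hdisj⟩ := List.nodup_append'.mp hnodup
  obtain ⟨_, hn2t, hdisj12⟩ := List.nodup_append'.mp hn12
  have hbmem2t : b ∈ p2.support.tail := Walk.end_mem_tail_support_of_ne hab.ne p2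
  have hbnot1 : b ∉ p1.support := fun hcon => hdisj12 hcon hbmem2t
  have hdisj13 : p1.support.Disjoint p3.support := by
    intro z hz1 hz3
    rw [Walk.support_eq_cons p3] at hz3
    rcases hz3 with _ | hz3
    · exact hbnot1 hz1
    · exact hdisj (List.mem_append_left _ hz1) (by assumption)
  -- the shortcut walk r
  let r : G.Walk x y := p1.append (Walk.cons hab p3)
  have hrsupp : r.support = p1.support ++ p3.support := by
    show (p1.append (Walk.cons hab p3)).support = _
    rw [Walk.support_append, Walk.support_cons, List.tail_cons]
  have hrpath : r.IsPath := by
    rw [Walk.isPath_def, hrsupp]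
    exact List.nodup_append'.mpr ⟨hn1, hn3, hdisj13⟩
  have hredges : r.edges = p1.edges ++ (s(a, b) :: p3.edges) := by
    show (p1.append (Walk.cons hab p3)).edges = _
    rw [Walk.edges_append, Walk.edges_cons]
  have hrexy : s(x, y) ∉ r.edges := by
    rw [hredges]
    intro hcon
    rcases List.mem_append.mp hcon with h | h
    · exact hexy (by rw [hPedges]; simp [h])
    · rcases List.mem_cons.mp h with h | h
      · exact hne (h.symm)
      · exact hexy (by rw [hPedges]; simp [h])
  have hrlen : r.length < P.length := by
    have : r.length = p1.length + (p3.length + 1) := by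
      show (p1.append (Walk.cons hab p3)).length = _
      rw [Walk.length_append, Walk.length_cons]
    omega
  have hrT : ∀ z ∈ r.support, z ∈ T := IH x y r hrlen hrpath hxy hrexy hx hy
  have haT : a ∈ T := hrT a (by rw [hrsupp]; exact List.mem_append_left _ p1.end_mem_support)
  have hbT : b ∈ T := hrT b (by rw [hrsupp]; exact List.mem_append_right _ p3.start_mem_support)
  have heab2 : s(a, b) ∉ p2.edges := fun h => heab (by rw [hPedges]; simp [h])
  have hl2lt : p2.length < P.length := by omega
  have hp2T : ∀ z ∈ p2.support, z ∈ T := IH a b p2 hl2lt hp2 hab heab2 haT hbT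
  intro z hz
  rw [hPsupp] at hz
  rcases List.mem_append.mp hz with hz | hz
  · rcases List.mem_append.mp hz with hz | hz
    · exact hrT z (by rw [hrsupp]; exact List.mem_append_left _ hz)
    · exact hp2T z (List.mem_of_mem_tail hz)
  · exact hrT z (by rw [hrsupp]; exact List.mem_append_right _ (List.mem_of_mem_tail hz))

lemma key {G : SimpleGraph V} (hch : Chordal G) {T : Set V} (hT : DeltaConvex G T) :
    ∀ (n : ℕ) {x y : V} (p : G.Walk x y), p.length ≤ n → p.IsPath → G.Adj x y →
      s(x, y) ∉ p.edges → x ∈ T → y ∈ T → ∀ z ∈ p.support, z ∈ T := by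
  intro n
  induction n with
  | zero =>
    intro x y p hl _ hadj _ _ _ _ _
    exact absurd (Walk.eq_of_length_eq_zero (Nat.le_zero.mp hl)) hadj.ne
  | succ n IH =>
    intro x y p hl hp hadj hexy hx hy
    by_cases hbig : 3 ≤ p.length
    · -- general case: use a chord
      have hccyc : (Walk.cons hadj.symm p).IsCycle := by
        rw [Walk.cons_isCycle_iff]
        exact ⟨hp, by rwa [Sym2.eq_swap]⟩
      obtain ⟨a, b, haS, hbS, hab, hchord⟩ :=
        hch y (Walk.cons hadj.symm p) hccyc (by rw [Walk.length_cons]; omega)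
      have hamem : a ∈ p.support := by
        rw [Walk.support_cons] at haS
        rcases List.mem_cons.mp haS with rfl | h
        · exact p.end_mem_support
        · exact h
      have hbmem : b ∈ p.support := by
        rw [Walk.support_cons] at hbS
        rcases List.mem_cons.mp hbS with rfl | h
        · exact p.end_mem_support
        · exact h
      have hxyc : s(x, y) ∈ (Walk.cons hadj.symm p).edges := by
        rw [Walk.edges_cons, Sym2.eq_swap]
        exact List.mem_cons_self
      have hpe : p.edges ⊆ (Walk.cons hadj.symm p).edges := by
        rw [Walk.edges_cons]; exact List.subset_cons_self _ _
      have hne : s(a, b) ≠ s(x, y) := fun h => hchord (h ▸ hxyc)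
      have heab : s(a, b) ∉ p.edges := fun h => hchord (hpe h)
      have hIH : ∀ (x' y' : V) (q : G.Walk x' y'), q.length < p.length →
          q.IsPath → G.Adj x' y' → s(x', y') ∉ q.edges → x' ∈ T → y' ∈ T →
          ∀ z ∈ q.support, z ∈ T := by
        intro x' y' q hql
        exact IH q (by omega)
      rcases exists_decomp p hamem hbmem with ⟨p1, p2, p3, hdec⟩ | ⟨p1, p2, p3, hdec⟩
      · rw [hdec] at hp hexy heab hIH ⊢
        exact key_once hT p1 p2 p3 hp hadj hab hexy heab hne hx hy hIH
      · rw [hdec] at hp hexy heab hIH ⊢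
        rw [Sym2.eq_swap] at heab hne
        exact key_once hT p1 p2 p3 hp hadj hab.symm hexy heab hne hx hy hIH
    · -- small cases
      cases p with
      | nil => exact absurd rfl hadj.ne
      | cons h1 q =>
        cases q with
        | nil => simp at hexy
        | cons h2 r =>
          cases r with
          | nil =>
            intro z hz
            simp only [Walk.support_cons, Walk.support_nil, List.mem_cons,
              List.mem_singleton, List.not_mem_nil, or_false] at hz
            rcases hz with rfl | rfl | rfl
            · exact hx
            · exact hT hx hy hadj h1.symm h2
            · exact hy
          | cons h3 s => exact absurd (by simp only [Walk.length_cons]; omega) hbig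

lemma hull_walk {G : SimpleGraph V} {u v : V} (huv : G.Adj u v) :
    ∀ s ∈ deltaHull G {u, v}, ∃ p : G.Walk u s, ∀ z ∈ p.support, z ∈ deltaHull G {u, v} := by
  set H := deltaHull G {u, v} with hH
  have hu : u ∈ H := subset_deltaHull _ _ (by simp)
  have hv : v ∈ H := subset_deltaHull _ _ (by simp)
  set T' : Set V := {x | ∃ p : G.Walk u x, ∀ z ∈ p.support, z ∈ H} with hT'
  have hconv : DeltaConvex G T' := by
    intro w a b haT' hbT' hab hwa hwb
    obtain ⟨p, hp⟩ := haT'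
    obtain ⟨pb, hpb⟩ := hbT'
    have haH : a ∈ H := hp a p.end_mem_support
    have hbH : b ∈ H := hpb b pb.end_mem_support
    have hwH : w ∈ H := deltaHull_convex G {u, v} haH hbH hab hwa hwb
    refine ⟨p.concat hwa.symm, ?_⟩
    intro z hz
    rw [Walk.support_concat] at hz
    rcases List.mem_append.mp hz with hz | hz
    · exact hp z hz
    · rw [List.mem_singleton] at hz
      exact hz ▸ hwH
  have hsub : ({u, v} : Set V) ⊆ T' := by
    intro z hz
    simp only [Set.mem_insert_iff, Set.mem_singleton_iff] at hz
    rcases hz with rfl | rfl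
    · refine ⟨Walk.nil, ?_⟩
      intro z hz
      simp only [Walk.support_nil, List.mem_singleton] at hz
      exact hz ▸ hu
    · refine ⟨Walk.cons huv Walk.nil, ?_⟩
      intro z hz
      simp only [Walk.support_cons, Walk.support_nil, List.mem_cons, List.mem_singleton,
        List.not_mem_nil, or_false] at hz
      rcases hz with rfl | rfl
      · exact hu
      · exact hv
  exact fun s hs => deltaHull_min hsub hconv hs

theorem stmt_9 [Fintype V] (G : SimpleGraph V)
    (h2c : TwoConnected G) (hch : Chordal G) (u v : V) (huv : G.Adj u v) :
    deltaHull G {u, v} = Set.univ := by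
  classical
  obtain ⟨hcard, hconn⟩ := h2c
  set H := deltaHull G {u, v} with hH
  by_contra hne
  have hex : ∃ w0, w0 ∉ H := by
    by_contra h
    push_neg at h
    exact hne (Set.eq_univ_of_forall h)
  obtain ⟨w0, hw0⟩ := hex
  have hu : u ∈ H := subset_deltaHull _ _ (by simp)
  have hv : v ∈ H := subset_deltaHull _ _ (by simp)
  have hHconv : DeltaConvex G H := deltaHull_convex G _
  -- G is preconnected
  have hGpre : G.Preconnected := by
    intro x y
    rcases eq_or_ne x y with rfl | hxy
    · exact Reachable.refl x
    obtain ⟨t, htx, hty⟩ : ∃ t, t ≠ x ∧ t ≠ y := by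
      by_contra h
      push_neg at h
      have hsub : (Finset.univ : Finset V) ⊆ {x, y} := by
        intro t _
        rcases em (t = x) with rfl | h'
        · simp
        · have := h t h'
          simp [this]
      have hle := Finset.card_le_card hsub
      have h2 : ({x, y} : Finset V).card ≤ 2 := le_trans (Finset.card_insert_le _ _) (by simp)
      rw [Finset.card_univ] at hle
      omega
    have hr := (hconn t).preconnected ⟨x, Ne.symm htx⟩ ⟨y, Ne.symm hty⟩
    exact hr.map (SimpleGraph.Embedding.induce {u' : V | u' ≠ t}).toHom
  -- boundary pair
  obtain ⟨W0⟩ := hGpre w0 u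
  obtain ⟨w, t, hwt, hwH, htH⟩ := exists_boundary H W0 hw0 hu
  have hwnet : w ≠ t := fun h => hwH (h ▸ htH)
  obtain ⟨z, hzH, hzt⟩ : ∃ z, z ∈ H ∧ z ≠ t := by
    rcases eq_or_ne u t with rfl | h
    · exact ⟨v, hv, huv.ne'⟩
    · exact ⟨u, hu, h⟩
  -- walk from w to z avoiding t
  obtain ⟨W1'⟩ := (hconn t).preconnected ⟨w, hwnet⟩ ⟨z, hzt⟩
  let W1 : G.Walk w z := W1'.map (SimpleGraph.Embedding.induce {u' : V | u' ≠ t}).toHom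
  have hW1t : ∀ x ∈ W1.support, x ≠ t := by
    intro x hx
    replace hx : x ∈ (W1'.map (SimpleGraph.Embedding.induce {u' : V | u' ≠ t}).toHom).support := hx
    rw [Walk.support_map] at hx
    obtain ⟨⟨x', hx'⟩, _, rfl⟩ := List.mem_map.mp hx
    exact hx'
  obtain ⟨s, q0, hsH, hq0sub, hq0out⟩ := exists_entry H W1 hwH hzH
  set q := q0.bypass with hq
  have hqpath : q.IsPath := Walk.bypass_isPath q0
  have hqsub : ∀ x ∈ q.support, x ∈ q0.support := fun x hx => Walk.support_bypass_subset _ hx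
  have hqt : ∀ x ∈ q.support, x ≠ t := fun x hx => hW1t x (hq0sub x (hqsub x hx))
  have hqout : ∀ x ∈ q.support, x ≠ s → x ∉ H := fun x hx => hq0out x (hqsub x hx)
  have hst : s ≠ t := hqt s q.end_mem_support
  -- path inside the hull from s to t
  obtain ⟨ps, hps⟩ := hull_walk huv s hsH
  obtain ⟨pt, hpt⟩ := hull_walk huv t htH
  have h0H : ∀ x ∈ (ps.reverse.append pt).support, x ∈ H := by
    intro x hx
    rcases (Walk.mem_support_append_iff _ _).mp hx with hx | hx
    · exact hps x (by rwa [Walk.support_reverse, List.mem_reverse] at hx)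
    · exact hpt x hx
  set h1 := (ps.reverse.append pt).bypass with hh1
  have h1path : h1.IsPath := Walk.bypass_isPath _
  have h1H : ∀ x ∈ h1.support, x ∈ H := fun x hx => h0H x (Walk.support_bypass_subset _ hx)
  obtain ⟨c, htc, h2, hh2⟩ := Walk.exists_eq_cons_of_ne (Ne.symm hst) h1.reverse
  have h1rpath : h1.reverse.IsPath := h1path.reverse
  rw [hh2] at h1rpath
  have h2path : h2.IsPath := ((Walk.cons_isPath_iff _ _).mp h1rpath).1
  have htnot2 : t ∉ h2.support := ((Walk.cons_isPath_iff _ _).mp h1rpath).2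
  have h2sub1 : ∀ x ∈ h2.support, x ∈ h1.support := by
    intro x hx
    have : x ∈ h1.reverse.support := by
      rw [hh2, Walk.support_cons]
      exact List.mem_cons_of_mem _ hx
    rwa [Walk.support_reverse, List.mem_reverse] at this
  have hcH : c ∈ H := h1H c (h2sub1 c h2.start_mem_support)
  have h2H : ∀ x ∈ h2.support, x ∈ H := fun x hx => h1H x (h2sub1 x hx)
  -- the outer path M from s through w to t
  set M : G.Walk s t := q.reverse.concat hwt with hM
  have hMsupp : M.support = q.reverse.support ++ [t] := by
    rw [hM, Walk.support_concat]
  have hqrs : q.reverse.support = s :: q.reverse.support.tail := Walk.support_eq_cons _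
  have hqrnodup : q.reverse.support.Nodup := hqpath.reverse.2
  have hsnotqt : s ∉ q.reverse.support.tail := by
    intro hcon
    rw [hqrs] at hqrnodup
    exact (List.nodup_cons.mp hqrnodup).1 hcon
  have hqrtail_sub : ∀ x ∈ q.reverse.support.tail, x ∈ q.support ∧ x ≠ s := by
    intro x hx
    constructor
    · have : x ∈ q.reverse.support := List.mem_of_mem_tail hx
      rwa [Walk.support_reverse, List.mem_reverse] at this
    · exact fun h => hsnotqt (h ▸ hx)
  -- the full path pstar from c to t
  set pstar : G.Walk c t := h2.append M with hpstar
  have hpsupp : pstar.support = h2.support ++ (q.reverse.support.tail ++ [t]) := by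
    rw [hpstar, Walk.support_append, hMsupp, hqrs]
    simp
  have hpstarpath : pstar.IsPath := by
    rw [Walk.isPath_def, hpsupp]
    refine List.nodup_append'.mpr ⟨h2path.2, ?_, ?_⟩
    · refine List.nodup_append'.mpr ⟨?_, List.nodup_singleton t, ?_⟩
      · rw [hqrs] at hqrnodup
        exact (List.nodup_cons.mp hqrnodup).2
      · intro x hx hxt
        rw [List.mem_singleton] at hxt
        subst hxt
        exact hqt x (hqrtail_sub x hx).1 rfl
    · intro x hx hx'
      rcases List.mem_append.mp hx' with hx' | hx'
      · obtain ⟨hxq, hxs⟩ := hqrtail_sub x hx'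
        exact hqout x hxq hxs (h2H x hx)
      · rw [List.mem_singleton] at hx'
        exact htnot2 (hx' ▸ hx)
  have hpedges : pstar.edges = h2.edges ++ (q.reverse.edges ++ [s(w, t)]) := by
    rw [hpstar, Walk.edges_append, hM, Walk.edges_concat, List.concat_eq_append]
  have hect : s(c, t) ∉ pstar.edges := by
    rw [hpedges]
    intro hcon
    rcases List.mem_append.mp hcon with h' | h'
    · exact htnot2 (Walk.snd_mem_support_of_mem_edges h2 h')
    · rcases List.mem_append.mp h' with h' | h'
      · have : t ∈ q.reverse.support := Walk.snd_mem_support_of_mem_edges _ h'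
        rw [Walk.support_reverse, List.mem_reverse] at this
        exact hqt t this rfl
      · rw [List.mem_singleton, Sym2.eq_iff] at h'
        rcases h' with ⟨rfl, _⟩ | ⟨rfl, rfl⟩
        · exact hwH hcH
        · exact htc.ne' rfl
  have hfinal := key hch hHconv pstar.length pstar le_rfl hpstarpath htc.symm hect hcH htH
  have hwmem : w ∈ pstar.support := by
    rw [hpstar]
    refine (Walk.mem_support_append_iff _ _).mpr (Or.inr ?_)
    rw [hMsupp]
    exact List.mem_append_left _ (by rw [Walk.support_reverse, List.mem_reverse]; exact q.start_mem_support)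
  exact hwH (hfinal w hwmem)
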